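/- Fix ε with 0 < ε ≤ 1/400 and set ε₀ = 16ε. With Q_{D'} the explicit quantile function defined in the context: (i) p·Q_{D'}(p) ≤ 0.4 for all p ∈ [0,1], with equality at p = 1/2 (so the monopoly price of D' is 1/2 with optimal revenue 0.4); and (ii) every p ∈ [0,1] with p·Q_{D'}(p) ≥ 0.4 − 1.6·ε satisfies p ≤ 1/2 + √ε. -/
import Mathlib


/-- Quantile function of the two-piece uniform distribution `D'`. -/
noncomputable def QD' (v : ℝ) : ℝ :=
  if v < 1 / 2 then 1 - 0.4 * v else 1.6 * (1 - v)

/-- For the distribution `D'`: (i) the revenue `p·Q_{D'}(p)` is at most `0.4` on `[0,1]`,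
with equality at `p = 1/2`; and (ii) any `p ∈ [0,1]` with revenue at least `0.4 − 1.6ε`
satisfies `p ≤ 1/2 + √ε`. -/
theorem monopoly_price_of_D' (ε : ℝ) (hε : 0 < ε) (hε' : ε ≤ 1 / 400) :
    (∀ p ∈ Set.Icc (0:ℝ) 1, p * QD' p ≤ 0.4) ∧
    (1 / 2) * QD' (1 / 2) = 0.4 ∧
    (∀ p ∈ Set.Icc (0:ℝ) 1, p * QD' p ≥ 0.4 - 1.6 * ε → p ≤ 1 / 2 + Real.sqrt ε) := by
  refine ⟨?_, ?_, ?_⟩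
  · intro p hp
    obtain ⟨hp0, hp1⟩ := hp
    unfold QD'
    split_ifs with h
    · nlinarith [sq_nonneg (p - 1/2)]
    · nlinarith [sq_nonneg (2*p - 1)]
  · unfold QD'; norm_num
  · intro p hp hrev
    obtain ⟨hp0, hp1⟩ := hp
    have hs : (0:ℝ) ≤ Real.sqrt ε := Real.sqrt_nonneg ε
    unfold QD' at hrev
    split_ifs at hrev with h
    · linarith
    · push_neg at h
      have hsq : (p - 1/2)^2 ≤ ε := by nlinarith
      have : Real.sqrt ((p - 1/2)^2) ≤ Real.sqrt ε := Real.sqrt_le_sqrt hsq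
      rw [Real.sqrt_sq (by linarith)] at this
      linarith
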